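/- Let R be a ring and L a Lie ideal with I([L, L]) = R (the ideal generated by [L,L] is all of R). Then [L, R] = [R, R] and R = [R, R]², the additive subgroup generated by products of two commutators. -/

import Mathlib

/-- The additive subgroup generated by commutators `a * b - b * a` with `a ∈ A`, `b ∈ B`. -/
def lieBr {R : Type*} [Ring R] (A B : Set R) : AddSubgroup R :=
  AddSubgroup.closure {z : R | ∃ a ∈ A, ∃ b ∈ B, z = a * b - b * a}

namespace Stmt10Aux

variable {R : Type*} [Ring R]

/-- `K = [R,R]` -/
abbrev KK (R : Type*) [Ring R] : AddSubgroup R := lieBr (Set.univ : Set R) Set.univ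

abbrev K2set (R : Type*) [Ring R] : Set R :=
  {z : R | ∃ u ∈ KK R, ∃ v ∈ KK R, z = u * v}

abbrev Mset (R : Type*) [Ring R] : Set R :=
  {z : R | ∃ a b : R, z = a * b - b * a} ∪ K2set R

/-- `M = [R,R] + [R,R]²` -/
abbrev MM (R : Type*) [Ring R] : AddSubgroup R := AddSubgroup.closure (Mset R)

lemma mem_KK (x y : R) : x * y - y * x ∈ KK R :=
  AddSubgroup.subset_closure ⟨x, Set.mem_univ x, y, Set.mem_univ y, rfl⟩

lemma comm_mem_M (x y : R) : x * y - y * x ∈ MM R :=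
  AddSubgroup.subset_closure (Or.inl ⟨x, y, rfl⟩)

lemma k2_mem_M {u v : R} (hu : u ∈ KK R) (hv : v ∈ KK R) : u * v ∈ MM R :=
  AddSubgroup.subset_closure (Or.inr ⟨u, hu, v, hv, rfl⟩)

lemma dmid (u v t a b : R) :
    u * ((a * b - b * a) * v - v * (a * b - b * a)) * t ∈ MM R := by
  have h : u * ((a * b - b * a) * v - v * (a * b - b * a)) * t
      = (u * (((a * b - b * a) * v - v * (a * b - b * a)) * t)
          - (((a * b - b * a) * v - v * (a * b - b * a)) * t) * u)
        + ((a * b - b * a) * (v * (t * u) - (t * u) * v)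
          - (v * ((a * b - b * a) * (t * u)) - ((a * b - b * a) * (t * u)) * v)) := by
    noncomm_ring
  rw [h]
  exact add_mem (comm_mem_M _ _)
    (sub_mem (k2_mem_M (mem_KK a b) (mem_KK v (t * u))) (comm_mem_M v _))

lemma slide (u v t a b : R) :
    u * (a * b - b * a) * v * t - u * v * (a * b - b * a) * t ∈ MM R := by
  have h : u * (a * b - b * a) * v * t - u * v * (a * b - b * a) * t
      = u * ((a * b - b * a) * v - v * (a * b - b * a)) * t := by noncomm_ring
  rw [h]; exact dmid u v t a b

lemma fsq (z a b : R) : z * (a * b - b * a) * (a * b - b * a) ∈ MM R := by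
  have h : z * (a * b - b * a) * (a * b - b * a)
      = (z * b - b * z) * (a * (a * b) - (a * b) * a) + ((z * b - b * z) * (b * (a * a) - (a * a) * b) + ((b * a - a * b) * (b * (a * z) - (a * z) * b) + (-(b * (z * a * b * a) - (z * a * b * a) * b) + ((b * (z * b * a * a) - (z * b * a * a) * b) + ((b * (a * b * a * z) - (a * b * a * z) * b) + (-(b * (b * a * a * z) - (b * a * a * z) * b) + (((z * (b * a * b * a) - (b * a * b * a) * z) + (z * (b * a * b * a) - (b * a * b * a) * z)) + (-(z * (a * b * b * a) - (a * b * b * a) * z) + (-(z * (b * b * a * a) - (b * b * a * a) * z)))))))))) := by noncomm_ring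
  rw [h]
  exact add_mem (k2_mem_M (mem_KK _ _) (mem_KK _ _))
    (add_mem (k2_mem_M (mem_KK _ _) (mem_KK _ _))
    (add_mem (k2_mem_M (mem_KK _ _) (mem_KK _ _))
    (add_mem (neg_mem (comm_mem_M _ _))
    (add_mem (comm_mem_M _ _)
    (add_mem (comm_mem_M _ _)
    (add_mem (neg_mem (comm_mem_M _ _))
    (add_mem (add_mem (comm_mem_M _ _) (comm_mem_M _ _))
    (add_mem (neg_mem (comm_mem_M _ _))
    (neg_mem (comm_mem_M _ _))))))))))

def prodF {n : ℕ} (F : Fin n → R) (σ : List (Fin n)) : R := (σ.map F).prod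

lemma prodF_nil {n : ℕ} (F : Fin n → R) : prodF F [] = 1 := rfl

lemma prodF_cons {n : ℕ} (F : Fin n → R) (j : Fin n) (σ : List (Fin n)) :
    prodF F (j :: σ) = F j * prodF F σ := by simp [prodF]

lemma prodF_append {n : ℕ} (F : Fin n → R) (σ : List (Fin n)) (i : Fin n) :
    prodF F (σ ++ [i]) = prodF F σ * F i := by simp [prodF]

lemma eraseLem {n : ℕ} (F : Fin n → R) (hF : ∀ i, ∃ a b : R, F i = a * b - b * a) :
    ∀ (σ : List (Fin n)) (i : Fin n), i ∈ σ → ∀ w t : R,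
      w * prodF F σ * t - w * prodF F (σ.erase i) * F i * t ∈ MM R := by
  intro σ
  induction σ with
  | nil => intro i hi _ _; exact absurd hi List.not_mem_nil
  | cons j σ' ih =>
    intro i hi w t
    by_cases hij : j = i
    · subst hij
      rw [List.erase_cons_head]
      obtain ⟨a, b, hab⟩ := hF j
      have h : w * prodF F (j :: σ') * t - w * prodF F σ' * F j * t
          = w * F j * prodF F σ' * t - w * prodF F σ' * F j * t := by
        rw [prodF_cons]; noncomm_ring
      rw [h, hab]
      exact slide w (prodF F σ') t a b
    · have hi' : i ∈ σ' := by
        rcases List.mem_cons.mp hi with h | h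
        · exact absurd h.symm hij
        · exact h
      have herase : (j :: σ').erase i = j :: σ'.erase i := by
        simp [List.erase_cons, hij]
      rw [herase]
      have h : w * prodF F (j :: σ') * t - w * prodF F (j :: σ'.erase i) * F i * t
          = w * F j * prodF F σ' * t - w * F j * prodF F (σ'.erase i) * F i * t := by
        rw [prodF_cons, prodF_cons]; noncomm_ring
      rw [h]
      exact ih i hi' (w * F j) t

lemma dupKill {n : ℕ} (F : Fin n → R) (hF : ∀ i, ∃ a b : R, F i = a * b - b * a)
    (σ : List (Fin n)) (hσ : ¬ σ.Nodup) (w : R) : w * prodF F σ ∈ MM R := by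
  rw [List.nodup_iff_count_le_one] at hσ
  push_neg at hσ
  obtain ⟨i, hcount⟩ := hσ
  have hi : i ∈ σ := by
    rw [← List.count_pos_iff]
    omega
  have hi2 : i ∈ σ.erase i := by
    rw [← List.count_pos_iff, List.count_erase_self]
    omega
  obtain ⟨a, b, hab⟩ := hF i
  have h1 := eraseLem F hF σ i hi w 1
  have h2 := eraseLem F hF (σ.erase i) i hi2 w (F i)
  have h3 : w * prodF F ((σ.erase i).erase i) * F i * F i ∈ MM R := by
    rw [hab]
    exact fsq (w * prodF F ((σ.erase i).erase i)) a b
  have he : w * prodF F σ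
      = (w * prodF F σ * 1 - w * prodF F (σ.erase i) * F i * 1)
        + ((w * prodF F (σ.erase i) * F i
            - w * prodF F ((σ.erase i).erase i) * F i * F i)
        + w * prodF F ((σ.erase i).erase i) * F i * F i) := by noncomm_ring
  rw [he]
  exact add_mem h1 (add_mem h2 h3)

lemma expand {n : ℕ} (F C : Fin n → R) (hF : ∀ i, ∃ a b : R, F i = a * b - b * a)
    (h1 : (1 : R) = ∑ i, F i * C i) :
    ∀ (m : ℕ) (σ : List (Fin n)) (z : R), σ.length + m = n + 1 → z * prodF F σ ∈ MM R := by
  intro m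
  induction m with
  | zero =>
    intro σ z hlen
    refine dupKill F hF σ (fun hnd => ?_) z
    have hcard := hnd.length_le_card
    rw [Fintype.card_fin] at hcard
    omega
  | succ m ih =>
    intro σ z hlen
    have e : z * prodF F σ = ∑ i, F i * C i * (z * prodF F σ) := by
      conv_lhs => rw [← one_mul (z * prodF F σ)]
      rw [h1, Finset.sum_mul]
    rw [e]
    refine sum_mem (fun i _ => ?_)
    have e2 : F i * C i * (z * prodF F σ)
        = C i * z * prodF F (σ ++ [i])
          + (F i * (C i * z * prodF F σ) - C i * z * prodF F σ * F i) := by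
      rw [prodF_append]; noncomm_ring
    rw [e2]
    refine add_mem (ih (σ ++ [i]) (C i * z) ?_) (comm_mem_M _ _)
    simp only [List.length_append, List.length_singleton]
    omega

abbrev Nset (R : Type*) [Ring R] : Set R := {z : R | ∃ x y c : R, z = (x * y - y * x) * c}

lemma N_mul_left (x : R) {y : R} (hy : y ∈ AddSubgroup.closure (Nset R)) :
    x * y ∈ AddSubgroup.closure (Nset R) := by
  induction hy using AddSubgroup.closure_induction with
  | mem z hz =>
    obtain ⟨u, v, c, rfl⟩ := hz
    have h : x * ((u * v - v * u) * c)
        = (x * u * v - v * (x * u)) * c + -((x * v - v * x) * (u * c)) := by noncomm_ring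
    rw [h]
    exact add_mem (AddSubgroup.subset_closure ⟨x * u, v, c, rfl⟩)
      (neg_mem (AddSubgroup.subset_closure ⟨x, v, u * c, rfl⟩))
  | zero => rw [mul_zero]; exact zero_mem _
  | add a b _ _ ha hb => rw [mul_add]; exact add_mem ha hb
  | neg a _ ha => rw [mul_neg]; exact neg_mem ha

lemma N_mul_right {y : R} (hy : y ∈ AddSubgroup.closure (Nset R)) (x : R) :
    y * x ∈ AddSubgroup.closure (Nset R) := by
  induction hy using AddSubgroup.closure_induction with
  | mem z hz =>
    obtain ⟨u, v, c, rfl⟩ := hz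
    rw [mul_assoc]
    exact AddSubgroup.subset_closure ⟨u, v, c * x, rfl⟩
  | zero => rw [zero_mul]; exact zero_mem _
  | add a b _ _ ha hb => rw [add_mul]; exact add_mem ha hb
  | neg a _ ha => rw [neg_mul]; exact neg_mem ha

def NI (R : Type*) [Ring R] : TwoSidedIdeal R :=
  TwoSidedIdeal.mk' (AddSubgroup.closure (Nset R) : Set R)
    (zero_mem _)
    (fun hx hy => add_mem hx hy)
    (fun hx => neg_mem hx)
    (fun {x y} hy => N_mul_left x hy)
    (fun {x y} hx => N_mul_right hx y)

lemma mem_NI {z : R} : z ∈ NI R ↔ z ∈ AddSubgroup.closure (Nset R) :=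
  TwoSidedIdeal.mem_mk' _ _ _ _ _ _ z

/-- every element of `R` lies in `M = K + K²`, given `1` in the ideal generated
by products commutator-times-element. -/
lemma main_mem (h1N : (1 : R) ∈ AddSubgroup.closure (Nset R)) :
    ∀ x : R, x ∈ MM R := by
  intro x
  rw [← AddSubgroup.mem_toAddSubmonoid, AddSubgroup.closure_toAddSubmonoid] at h1N
  obtain ⟨l, hl, hsum⟩ := AddSubmonoid.exists_list_of_mem_closure h1N
  have hl' : ∀ i : Fin l.length, ∃ a b c : R, l.get i = (a * b - b * a) * c := by
    intro i
    rcases hl (l.get i) (List.get_mem l i) with h | h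
    · exact h
    · rw [Set.mem_neg] at h
      obtain ⟨a, b, c, hc⟩ := h
      exact ⟨a, b, -c, by rw [mul_neg, ← hc, neg_neg]⟩
  choose fa fb fc hf using hl'
  have hsum' : (1 : R) = ∑ i, (fun i => fa i * fb i - fb i * fa i) i * fc i := by
    calc (1 : R) = l.sum := hsum.symm
    _ = (List.ofFn l.get).sum := by rw [List.ofFn_get]
    _ = ∑ i, l.get i := Fin.sum_ofFn _
    _ = ∑ i, (fun i => fa i * fb i - fb i * fa i) i * fc i :=
        Finset.sum_congr rfl (fun i _ => hf i)
  have hx := expand (fun i => fa i * fb i - fb i * fa i) fc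
    (fun i => ⟨fa i, fb i, rfl⟩) hsum' (l.length + 1) [] x (by simp)
  simpa [prodF] using hx

abbrev Tset (L : AddSubgroup R) : Set R :=
  (L : Set R) ∪ {z : R | ∃ a ∈ L, ∃ b ∈ L, z = a * b}

abbrev TT (L : AddSubgroup R) : AddSubgroup R := AddSubgroup.closure (Tset L)

lemma mem_T_L {L : AddSubgroup R} {a : R} (ha : a ∈ L) : a ∈ TT L :=
  AddSubgroup.subset_closure (Or.inl ha)

lemma mem_T_mul {L : AddSubgroup R} {a b : R} (ha : a ∈ L) (hb : b ∈ L) : a * b ∈ TT L :=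
  AddSubgroup.subset_closure (Or.inr ⟨a, ha, b, hb, rfl⟩)

lemma partA {L : AddSubgroup R} (hL : ∀ x ∈ L, ∀ r : R, x * r - r * x ∈ L)
    {z : R} (hz : z ∈ lieBr (L : Set R) (L : Set R)) : ∀ r s : R, r * z * s ∈ TT L := by
  induction hz using AddSubgroup.closure_induction with
  | mem w hw =>
    obtain ⟨a, ha, b, hb, rfl⟩ := hw
    intro r s
    have h : r * (a * b - b * a) * s
        = (b * r - r * b) * (a * s - s * a)
          + (((b * r - r * b) * s - s * (b * r - r * b)) * a
          + (-((b * (r * a) - r * a * b) * s - s * (b * (r * a) - r * a * b))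
          + ((b * (s * r) - s * r * b) * a
          + -(b * (s * (r * a)) - s * (r * a) * b)))) := by noncomm_ring
    rw [h]
    refine add_mem (mem_T_mul (hL b hb r) (hL a ha s))
      (add_mem (mem_T_mul (hL _ (hL b hb r) s) ha)
      (add_mem (neg_mem (mem_T_L (hL _ (hL b hb (r * a)) s)))
      (add_mem (mem_T_mul (hL b hb (s * r)) ha)
      (neg_mem (mem_T_L (hL b hb (s * (r * a))))))))
  | zero => intro r s; rw [mul_zero, zero_mul]; exact zero_mem _
  | add a b _ _ iha ihb => intro r s; rw [mul_add, add_mul]; exact add_mem (iha r s) (ihb r s)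
  | neg a _ iha => intro r s; rw [mul_neg, neg_mul]; exact neg_mem (iha r s)

def JT (T : AddSubgroup R) : TwoSidedIdeal R :=
  TwoSidedIdeal.mk' {x : R | ∀ r s : R, r * x * s ∈ T}
    (fun r s => by rw [mul_zero, zero_mul]; exact zero_mem _)
    (fun hx hy r s => by rw [mul_add, add_mul]; exact add_mem (hx r s) (hy r s))
    (fun hx r s => by rw [mul_neg, neg_mul]; exact neg_mem (hx r s))
    (fun {x y} hy r s => by
      have h : r * (x * y) * s = r * x * y * s := by noncomm_ring
      rw [h]; exact hy (r * x) s)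
    (fun {x y} hx r s => by
      have h : r * (x * y) * s = r * x * (y * s) := by noncomm_ring
      rw [h]; exact hx r (y * s))

lemma mem_JT {T : AddSubgroup R} {x : R} : x ∈ JT T ↔ ∀ r s : R, r * x * s ∈ T :=
  TwoSidedIdeal.mem_mk' _ _ _ _ _ _ x

end Stmt10Aux

open Stmt10Aux in
theorem stmt10 {R : Type*} [Ring R]
    (L : AddSubgroup R) (hL : ∀ x ∈ L, ∀ r : R, x * r - r * x ∈ L)
    (hspan : TwoSidedIdeal.span (lieBr (L : Set R) (L : Set R) : Set R) = ⊤) :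
    lieBr (L : Set R) Set.univ = lieBr (Set.univ : Set R) Set.univ ∧
    AddSubgroup.closure {z : R | ∃ u ∈ lieBr (Set.univ : Set R) Set.univ,
        ∃ v ∈ lieBr (Set.univ : Set R) Set.univ, z = u * v} = ⊤ := by
  -- Part A : every element of `R` lies in `T = L + L·L`
  have hTall : ∀ x : R, x ∈ TT L := by
    intro x
    have hx : x ∈ TwoSidedIdeal.span ((lieBr (L : Set R) (L : Set R) : AddSubgroup R) : Set R) := by
      rw [hspan]; trivial
    have hx2 := TwoSidedIdeal.mem_span_iff.mp hx (JT (TT L)) ?_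
    · have := mem_JT.mp hx2 1 1
      simpa using this
    · intro w hw
      rw [SetLike.mem_coe] at hw
      exact SetLike.mem_coe.mpr (mem_JT.mpr (partA hL hw))
  -- `1` lies in the ideal generated by elements `[x,y]·z`
  have h1N : (1 : R) ∈ AddSubgroup.closure (Nset R) := by
    have hx : (1 : R) ∈ TwoSidedIdeal.span ((lieBr (L : Set R) (L : Set R) : AddSubgroup R) : Set R) := by
      rw [hspan]; trivial
    have hx2 := TwoSidedIdeal.mem_span_iff.mp hx (NI R) ?_
    · exact mem_NI.mp hx2
    · intro w hw
      rw [SetLike.mem_coe] at hw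
      refine SetLike.mem_coe.mpr (mem_NI.mpr ?_)
      have hle : lieBr (L : Set R) (L : Set R) ≤ AddSubgroup.closure (Nset R) := by
        refine (AddSubgroup.closure_le _).mpr ?_
        rintro z ⟨a, _, b, _, rfl⟩
        exact AddSubgroup.subset_closure ⟨a, b, 1, (mul_one _).symm⟩
      exact hle hw
  have hMall : ∀ x : R, x ∈ MM R := main_mem h1N
  -- all commutators lie in `K²`
  have commK2 : ∀ x y : R, x * y - y * x ∈ AddSubgroup.closure (K2set R) := by
    have step : ∀ x ∈ MM R, ∀ y ∈ MM R, x * y - y * x ∈ AddSubgroup.closure (K2set R) := by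
      intro x hx
      induction hx using AddSubgroup.closure_induction with
      | mem a ha =>
        rcases ha with ⟨p, q, rfl⟩ | ⟨u, hu, v, hv, rfl⟩
        · intro y hy
          induction hy using AddSubgroup.closure_induction with
          | mem b hb =>
            rcases hb with ⟨p', q', rfl⟩ | ⟨u', hu', v', hv', rfl⟩
            · exact sub_mem
                (AddSubgroup.subset_closure ⟨_, mem_KK p q, _, mem_KK p' q', rfl⟩)
                (AddSubgroup.subset_closure ⟨_, mem_KK p' q', _, mem_KK p q, rfl⟩)
            · have h : (p * q - q * p) * (u' * v') - (u' * v') * (p * q - q * p)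
                  = u' * ((p * q - q * p) * v' - v' * (p * q - q * p))
                    + ((p * q - q * p) * u' - u' * (p * q - q * p)) * v' := by noncomm_ring
              rw [h]
              exact add_mem
                (AddSubgroup.subset_closure ⟨u', hu', _, mem_KK _ v', rfl⟩)
                (AddSubgroup.subset_closure ⟨_, mem_KK _ u', v', hv', rfl⟩)
          | zero =>
            have h : (p * q - q * p) * 0 - 0 * (p * q - q * p) = 0 := by noncomm_ring
            rw [h]; exact zero_mem _
          | add b c _ _ ihb ihc =>
            have h : (p * q - q * p) * (b + c) - (b + c) * (p * q - q * p)
                = ((p * q - q * p) * b - b * (p * q - q * p))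
                  + ((p * q - q * p) * c - c * (p * q - q * p)) := by noncomm_ring
            rw [h]; exact add_mem ihb ihc
          | neg b _ ihb =>
            have h : (p * q - q * p) * (-b) - (-b) * (p * q - q * p)
                = -((p * q - q * p) * b - b * (p * q - q * p)) := by noncomm_ring
            rw [h]; exact neg_mem ihb
        · intro y _
          have h : (u * v) * y - y * (u * v)
              = u * (v * y - y * v) + (u * y - y * u) * v := by noncomm_ring
          rw [h]
          exact add_mem
            (AddSubgroup.subset_closure ⟨u, hu, _, mem_KK v y, rfl⟩)
            (AddSubgroup.subset_closure ⟨_, mem_KK u y, v, hv, rfl⟩)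
      | zero =>
        intro y _
        have h : (0 : R) * y - y * 0 = 0 := by noncomm_ring
        rw [h]; exact zero_mem _
      | add a b _ _ iha ihb =>
        intro y hy
        have h : (a + b) * y - y * (a + b) = (a * y - y * a) + (b * y - y * b) := by noncomm_ring
        rw [h]; exact add_mem (iha y hy) (ihb y hy)
      | neg a _ iha =>
        intro y hy
        have h : (-a) * y - y * (-a) = -(a * y - y * a) := by noncomm_ring
        rw [h]; exact neg_mem (iha y hy)
    intro x y; exact step x (hMall x) y (hMall y)
  constructor
  · -- goal 1
    apply le_antisymm
    · exact AddSubgroup.closure_mono (by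
        rintro z ⟨a, _, b, _, rfl⟩
        exact ⟨a, Set.mem_univ a, b, Set.mem_univ b, rfl⟩)
    · refine (AddSubgroup.closure_le _).mpr ?_
      rintro z ⟨x, -, y, -, rfl⟩
      have hx := hTall x
      induction hx using AddSubgroup.closure_induction with
      | mem w hw =>
        rcases hw with hw | ⟨l1, h1, l2, h2, rfl⟩
        · exact AddSubgroup.subset_closure ⟨w, hw, y, Set.mem_univ y, rfl⟩
        · have h : (l1 * l2) * y - y * (l1 * l2)
              = (l1 * (l2 * y) - (l2 * y) * l1) + (l2 * (y * l1) - (y * l1) * l2) := by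
            noncomm_ring
          rw [h]
          exact add_mem
            (AddSubgroup.subset_closure ⟨l1, h1, l2 * y, Set.mem_univ _, rfl⟩)
            (AddSubgroup.subset_closure ⟨l2, h2, y * l1, Set.mem_univ _, rfl⟩)
      | zero =>
        have h : (0 : R) * y - y * 0 = 0 := by noncomm_ring
        rw [h]; exact zero_mem _
      | add a b _ _ iha ihb =>
        have h : (a + b) * y - y * (a + b) = (a * y - y * a) + (b * y - y * b) := by noncomm_ring
        rw [h]; exact add_mem iha ihb
      | neg a _ iha =>
        have h : (-a) * y - y * (-a) = -(a * y - y * a) := by noncomm_ring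
        rw [h]; exact neg_mem iha
  · -- goal 2
    rw [eq_top_iff]
    intro x _
    have hle : MM R ≤ AddSubgroup.closure (K2set R) := by
      refine (AddSubgroup.closure_le _).mpr ?_
      rintro z (⟨a, b, rfl⟩ | hz)
      · exact commK2 a b
      · exact AddSubgroup.subset_closure hz
    exact hle (hMall x)
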